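/- Integral representation of the reciprocal Erlang-B blocking probability: for every natural M and every real a > 0, a · ∫₀^∞ (1+t)^M e^{−a t} dt = (∑_{j=0}^{M} a^j / j!) / (a^M / M!), i.e. this integral equals 1 / B(M, a). -/

import Mathlib

open MeasureTheory Real Set Filter

/-- The Erlang-B blocking probability with `M` servers and offered load `a`:
`B(M, a) = (a^M / M!) / (∑_{j=0}^{M} a^j / j!)`. -/
noncomputable def ErlangB (M : ℕ) (a : ℝ) : ℝ :=
  (a ^ M / (Nat.factorial M : ℝ)) / (∑ j ∈ Finset.range (M + 1), a ^ j / (Nat.factorial j : ℝ))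

lemma integrable_pow_exp_aux {a : ℝ} (ha : 0 < a) (k : ℕ) :
    IntegrableOn (fun t : ℝ => t ^ k * Real.exp (-(a * t))) (Ioi 0) := by
  apply integrable_of_isBigO_exp_neg (half_pos ha) (by fun_prop)
  have h := tendsto_rpow_mul_exp_neg_mul_atTop_nhds_zero (k : ℝ) (a / 2) (half_pos ha)
  rw [Asymptotics.isBigO_iff]
  refine ⟨1, ?_⟩
  filter_upwards [h.eventually (eventually_le_nhds (by norm_num : (0:ℝ) < 1)),
    eventually_gt_atTop (0:ℝ)] with x hx hx0
  rw [Real.rpow_natCast] at hx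
  have hsplit : Real.exp (-(a * x)) = Real.exp (-(a / 2) * x) * Real.exp (-(a / 2) * x) := by
    rw [← Real.exp_add]; ring_nf
  rw [Real.norm_eq_abs, Real.norm_eq_abs, hsplit, abs_of_nonneg (by positivity),
    abs_of_nonneg (Real.exp_pos _).le, ← mul_assoc]
  have h1 : x ^ k * Real.exp (-(a / 2) * x) ≤ 1 := hx
  nlinarith [Real.exp_pos (-(a/2) * x), pow_pos hx0 k,
    mul_pos (pow_pos hx0 k) (Real.exp_pos (-(a/2)*x))]

lemma integral_pow_exp_aux {a : ℝ} (ha : 0 < a) (k : ℕ) :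
    ∫ t in Ioi (0:ℝ), t ^ k * Real.exp (-(a * t)) = (k.factorial : ℝ) / a ^ (k + 1) := by
  have h := Real.integral_rpow_mul_exp_neg_mul_Ioi (a := (k : ℝ) + 1) (r := a)
    (by positivity) ha
  have hcongr : ∫ t in Ioi (0:ℝ), t ^ ((k : ℝ) + 1 - 1) * Real.exp (-(a * t))
      = ∫ t in Ioi (0:ℝ), t ^ k * Real.exp (-(a * t)) := by
    refine setIntegral_congr_fun measurableSet_Ioi fun t ht => ?_
    rw [add_sub_cancel_right, Real.rpow_natCast]
  rw [hcongr] at h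
  rw [h, Real.Gamma_nat_eq_factorial,
    show ((k:ℝ) + 1) = ((k + 1 : ℕ) : ℝ) by push_cast; ring, Real.rpow_natCast,
    div_pow, one_pow]
  ring

/-- Integral representation of the reciprocal Erlang-B blocking probability: for every
natural `M` and every real `a > 0`,
`a · ∫₀^∞ (1+t)^M e^{−a t} dt = (∑_{j=0}^{M} a^j / j!) / (a^M / M!) = 1 / B(M, a)`. -/
theorem erlangB_reciprocal_integral (M : ℕ) (a : ℝ) (ha : 0 < a) :
    a * ∫ t in Set.Ioi (0 : ℝ), (1 + t) ^ M * Real.exp (-(a * t)) =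
        (∑ j ∈ Finset.range (M + 1), a ^ j / (Nat.factorial j : ℝ)) /
          (a ^ M / (Nat.factorial M : ℝ)) ∧
      a * ∫ t in Set.Ioi (0 : ℝ), (1 + t) ^ M * Real.exp (-(a * t)) = 1 / ErlangB M a := by
  have key : a * ∫ t in Set.Ioi (0 : ℝ), (1 + t) ^ M * Real.exp (-(a * t)) =
      (∑ j ∈ Finset.range (M + 1), a ^ j / (Nat.factorial j : ℝ)) /
        (a ^ M / (Nat.factorial M : ℝ)) := by
    have hint : ∫ t in Set.Ioi (0 : ℝ), (1 + t) ^ M * Real.exp (-(a * t))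
        = ∑ k ∈ Finset.range (M + 1),
            (M.choose k : ℝ) * ((k.factorial : ℝ) / a ^ (k + 1)) := by
      have hexpand : ∀ t : ℝ, (1 + t) ^ M * Real.exp (-(a * t))
          = ∑ k ∈ Finset.range (M + 1),
              (M.choose k : ℝ) * (t ^ k * Real.exp (-(a * t))) := by
        intro t
        rw [add_comm (1:ℝ) t, add_pow, Finset.sum_mul]
        exact Finset.sum_congr rfl fun k _ => by ring
      simp_rw [hexpand]
      rw [integral_finset_sum _ fun k _ => ((integrable_pow_exp_aux ha k).const_mul _)]
      refine Finset.sum_congr rfl fun k _ => ?_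
      rw [integral_const_mul, integral_pow_exp_aux ha k]
    rw [hint, Finset.mul_sum, Finset.sum_div,
      ← Finset.sum_range_reflect
        (fun j => a ^ j / (Nat.factorial j : ℝ) / (a ^ M / (Nat.factorial M : ℝ)))]
    refine Finset.sum_congr rfl fun k hk => ?_
    have hk' : k ≤ M := Nat.lt_succ_iff.mp (Finset.mem_range.mp hk)
    have hfac : (M.choose k : ℝ) * k.factorial * (M - k).factorial = M.factorial := by
      exact_mod_cast congrArg (Nat.cast : ℕ → ℝ) (Nat.choose_mul_factorial_mul_factorial hk')
    have hpow : a ^ (M - k) * a ^ k = a ^ M := pow_sub_mul_pow a hk'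
    have hfk : ((M - k).factorial : ℝ) ≠ 0 := Nat.cast_ne_zero.mpr (Nat.factorial_ne_zero _)
    have hfM : (M.factorial : ℝ) ≠ 0 := Nat.cast_ne_zero.mpr (Nat.factorial_ne_zero _)
    have ha' : a ≠ 0 := ha.ne'
    field_simp
    rw [← hpow]
    simp only [Nat.add_sub_cancel]
    linear_combination (a * a ^ (M - k) * a ^ k) * hfac
  exact ⟨key, by rw [key, ErlangB, one_div_div]⟩
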